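/- arXiv:2303.06651 — 9 statements merged into one kernel-verified Lean document; each statement's English description precedes it below -/
import Mathlib

section
/- Let a ∈ R have a WD inverse x with index k and a Moore-Penrose inverse a†. Then y = x·a·a† satisfies: yay = y, ay = aa†, and y·a^k = x·a^k. -/
theorem WDMP_candidate_solution {R : Type*} [Ring R] [StarRing R] (a x ad : R) (k : ℕ) (hk : 0 < k)
    (hmp1 : a * ad * a = a) (hmp2 : ad * a * ad = ad)
    (hmp3 : star (a * ad) = a * ad) (hmp4 : star (ad * a) = ad * a)
    (h1 : a * x * a = a) (h2 : a ^ (k + 1) * x = a ^ k) (h3 : x * a ^ (k + 1) = a ^ k) :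
    x * a * ad * a * (x * a * ad) = x * a * ad ∧
    a * (x * a * ad) = a * ad ∧
    x * a * ad * a ^ k = x * a ^ k := by
  have e1 : x * a * ad * a = x * a := by
    rw [mul_assoc x a ad, mul_assoc x (a * ad) a, hmp1]
  have e2 : x * a * x * a = x * a := by
    rw [mul_assoc x a x, mul_assoc x (a * x) a, h1]
  refine ⟨?_, ?_, ?_⟩
  · rw [e1]
    simp only [← mul_assoc]
    rw [e2]
  · simp only [← mul_assoc, h1]
  · obtain ⟨m, rfl⟩ : ∃ m, k = m + 1 := ⟨k - 1, (Nat.succ_pred_eq_of_pos hk).symm⟩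
    rw [pow_succ' a m]
    simp only [← mul_assoc]
    rw [e1]
end

section
/- Let y be a WDMP inverse of a with index k. Then y·a^{k+1}·y = a^k·a†. -/
theorem WDMP_y_pow_y {R : Type*} [Ring R] [StarRing R] (a x ad y : R) (k : ℕ) (hk : 0 < k)
    (hmp1 : a * ad * a = a) (hmp2 : ad * a * ad = ad)
    (hmp3 : star (a * ad) = a * ad) (hmp4 : star (ad * a) = ad * a)
    (h1 : a * x * a = a) (h2 : a ^ (k + 1) * x = a ^ k) (h3 : x * a ^ (k + 1) = a ^ k)
    (hy1 : y * a * y = y) (hy2 : a * y = a * ad) (hy3 : y * a ^ k = x * a ^ k) :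
    y * a ^ (k + 1) * y = a ^ k * ad := by
  have : y * a ^ (k + 1) * y = (y * a ^ k) * (a * y) := by
    rw [pow_succ]; noncomm_ring
  rw [this, hy3, hy2, show x * a ^ k * (a * ad) = (x * a ^ (k+1)) * ad by rw [pow_succ]; noncomm_ring,
    h3]
end

section
/- Let a ∈ R be Hermitian (a* = a) with Moore-Penrose inverse a†, WD inverse x of index k, and WDMP inverse y. Then a²y = a. -/
theorem WDMP_hermitian_a2y {R : Type*} [Ring R] [StarRing R] (a x ad y : R) (k : ℕ) (hk : 0 < k)
    (hmp1 : a * ad * a = a) (hmp2 : ad * a * ad = ad)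
    (hmp3 : star (a * ad) = a * ad) (hmp4 : star (ad * a) = ad * a)
    (h1 : a * x * a = a) (h2 : a ^ (k + 1) * x = a ^ k) (h3 : x * a ^ (k + 1) = a ^ k)
    (hy1 : y * a * y = y) (hy2 : a * y = a * ad) (hy3 : y * a ^ k = x * a ^ k) (ha : star a = a) :
    a ^ 2 * y = a := by
  have key : star (a * (a * ad)) = a := by
    rw [star_mul, hmp3, ha]; exact hmp1
  have : a * (a * ad) = a := by
    have := congrArg star key
    rwa [star_star, ha] at this
  rw [pow_two, mul_assoc, hy2, this]
end

section
/- Let a, b ∈ R have WD inverses a', b' respectively with common index k. If ab = ba = 0, ab' = b'a = 0, and a'b = ba' = 0, then a' + b' is a WD inverse of a + b with index k. -/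
lemma pow_add_of_mul_zero {R : Type*} [Ring R] {a b : R} (hab : a * b = 0)
    (hba : b * a = 0) : ∀ n, 0 < n → (a + b) ^ n = a ^ n + b ^ n := by
  intro n hn
  induction n with
  | zero => omega
  | succ m ih =>
    rcases Nat.eq_zero_or_pos m with hm | hm
    · subst hm; simp
    · obtain ⟨n, rfl⟩ := Nat.exists_eq_add_of_lt hm
      rw [pow_succ, ih hm, add_mul, mul_add, mul_add, ← pow_succ, ← pow_succ]
      have h1 : a ^ (0 + n + 1) * b = a ^ (0 + n) * (a * b) := by
        rw [← mul_assoc, ← pow_succ]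
      have h2 : b ^ (0 + n + 1) * a = b ^ (0 + n) * (b * a) := by
        rw [← mul_assoc, ← pow_succ]
      rw [h1, h2, hab, hba]; noncomm_ring

theorem WD_additive {R : Type*} [Ring R] (a b a' b' : R) (k : ℕ) (hk : 0 < k)
    (ha1 : a * a' * a = a) (ha2 : a ^ (k + 1) * a' = a ^ k) (ha3 : a' * a ^ (k + 1) = a ^ k)
    (hb1 : b * b' * b = b) (hb2 : b ^ (k + 1) * b' = b ^ k) (hb3 : b' * b ^ (k + 1) = b ^ k)
    (hab : a * b = 0) (hba : b * a = 0) (hab2 : a * b' = 0) (hb2a : b' * a = 0) (ha2b : a' * b = 0) (hba2 : b * a' = 0) :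
    (a + b) * (a' + b') * (a + b) = a + b ∧ (a + b) ^ (k + 1) * (a' + b') = (a + b) ^ k ∧ (a' + b') * (a + b) ^ (k + 1) = (a + b) ^ k := by
  have hk1 := pow_add_of_mul_zero hab hba (k + 1) (by omega)
  have hk0 := pow_add_of_mul_zero hab hba k hk
  refine ⟨?_, ?_, ?_⟩
  · have h1 : a * (a' * b) = 0 := by rw [ha2b, mul_zero]
    have h2 : b * (b' * a) = 0 := by rw [hb2a, mul_zero]
    calc (a + b) * (a' + b') * (a + b)
        = a * a' * a + a * (a' * b) + (a * b') * a + (a * b') * b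
          + (b * a') * a + (b * a') * b + b * (b' * a) + b * b' * b := by noncomm_ring
      _ = a + b := by rw [h1, h2, hab2, hba2, ha1, hb1]; noncomm_ring
  · have h1 : a ^ (k + 1) * b' = a ^ k * (a * b') := by rw [← mul_assoc, ← pow_succ]
    have h2 : b ^ (k + 1) * a' = b ^ k * (b * a') := by rw [← mul_assoc, ← pow_succ]
    rw [hk1, hk0, add_mul, mul_add, mul_add, h1, h2, hab2, hba2, ha2, hb2]; noncomm_ring
  · have h1 : b' * a ^ (k + 1) = (b' * a) * a ^ k := by rw [mul_assoc, ← pow_succ']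
    have h2 : a' * b ^ (k + 1) = (a' * b) * b ^ k := by rw [mul_assoc, ← pow_succ']
    rw [hk1, hk0, mul_add, add_mul, add_mul, h1, h2, hb2a, ha2b, ha3, hb3]; noncomm_ring
end

section
/- Let a, b ∈ R have WD inverses a', b' respectively with common index k. If ab = ba and bb'a' = a'bb', then b'a' is a WD inverse of ab with index k. -/
theorem WD_reverse_order {R : Type*} [Ring R] (a b a' b' : R) (k : ℕ) (hk : 0 < k)
    (ha1 : a * a' * a = a) (ha2 : a ^ (k + 1) * a' = a ^ k) (ha3 : a' * a ^ (k + 1) = a ^ k)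
    (hb1 : b * b' * b = b) (hb2 : b ^ (k + 1) * b' = b ^ k) (hb3 : b' * b ^ (k + 1) = b ^ k)
    (hcomm : a * b = b * a) (hc : b * b' * a' = a' * (b * b')) :
    a * b * (b' * a') * (a * b) = a * b ∧ (a * b) ^ (k + 1) * (b' * a') = (a * b) ^ k ∧ (b' * a') * (a * b) ^ (k + 1) = (a * b) ^ k := by
  have hab : Commute a b := hcomm
  have h1 : b * b' * (a * b) = a * b := by
    rw [hcomm, ← mul_assoc, hb1, ← hcomm]
  refine ⟨?_, ?_, ?_⟩
  · calc a * b * (b' * a') * (a * b)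
        = a * ((b * b' * a') * (a * b)) := by noncomm_ring
      _ = a * ((a' * (b * b')) * (a * b)) := by rw [hc]
      _ = a * a' * (b * b' * (a * b)) := by noncomm_ring
      _ = a * a' * (a * b) := by rw [h1]
      _ = a * a' * a * b := by noncomm_ring
      _ = a * b := by rw [ha1]
  · calc (a * b) ^ (k + 1) * (b' * a')
        = a ^ (k + 1) * b ^ (k + 1) * (b' * a') := by rw [hab.mul_pow]
      _ = a ^ (k + 1) * (b ^ (k + 1) * b') * a' := by noncomm_ring
      _ = a ^ (k + 1) * b ^ k * a' := by rw [hb2]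
      _ = b ^ k * a ^ (k + 1) * a' := by rw [(hab.pow_pow (k + 1) k).eq]
      _ = b ^ k * (a ^ (k + 1) * a') := by rw [mul_assoc]
      _ = b ^ k * a ^ k := by rw [ha2]
      _ = a ^ k * b ^ k := ((hab.pow_pow k k).eq).symm
      _ = (a * b) ^ k := (hab.mul_pow k).symm
  · calc (b' * a') * (a * b) ^ (k + 1)
        = b' * a' * (a ^ (k + 1) * b ^ (k + 1)) := by rw [hab.mul_pow]
      _ = b' * (a' * a ^ (k + 1)) * b ^ (k + 1) := by noncomm_ring
      _ = b' * a ^ k * b ^ (k + 1) := by rw [ha3]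
      _ = b' * (a ^ k * b ^ (k + 1)) := by rw [mul_assoc]
      _ = b' * (b ^ (k + 1) * a ^ k) := by rw [(hab.pow_pow k (k + 1)).eq]
      _ = b' * b ^ (k + 1) * a ^ k := by rw [mul_assoc]
      _ = b ^ k * a ^ k := by rw [hb3]
      _ = a ^ k * b ^ k := ((hab.pow_pow k k).eq).symm
      _ = (a * b) ^ k := (hab.mul_pow k).symm
end

section
/- Let a, b ∈ R have WD inverses a', b' respectively with common index k. If ab = ba and ba'a = a'ab, then b'a' is a WD inverse of ab with index k. -/
theorem WD_reverse_order2 {R : Type*} [Ring R] (a b a' b' : R) (k : ℕ) (hk : 0 < k)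
    (ha1 : a * a' * a = a) (ha2 : a ^ (k + 1) * a' = a ^ k) (ha3 : a' * a ^ (k + 1) = a ^ k)
    (hb1 : b * b' * b = b) (hb2 : b ^ (k + 1) * b' = b ^ k) (hb3 : b' * b ^ (k + 1) = b ^ k)
    (hcomm : a * b = b * a) (hc : b * (a' * a) = a' * a * b) :
    a * b * (b' * a') * (a * b) = a * b ∧ (a * b) ^ (k + 1) * (b' * a') = (a * b) ^ k ∧ (b' * a') * (a * b) ^ (k + 1) = (a * b) ^ k := by
  have hab : Commute a b := hcomm
  refine ⟨?_, ?_, ?_⟩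
  · calc a * b * (b' * a') * (a * b)
        = a * (b * b') * (a' * a * b) := by noncomm_ring
      _ = a * (b * b') * (b * (a' * a)) := by rw [hc]
      _ = a * (b * b' * b) * (a' * a) := by noncomm_ring
      _ = a * (b * (a' * a)) := by rw [hb1]; noncomm_ring
      _ = a * (a' * a * b) := by rw [hc]
      _ = a * a' * a * b := by noncomm_ring
      _ = a * b := by rw [ha1]
  · calc (a * b) ^ (k + 1) * (b' * a')
        = a ^ (k + 1) * (b ^ (k + 1) * b') * a' := by rw [hab.mul_pow]; noncomm_ring
      _ = a ^ (k + 1) * b ^ k * a' := by rw [hb2]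
      _ = b ^ k * (a ^ (k + 1) * a') := by rw [(hab.pow_pow (k + 1) k).eq]; noncomm_ring
      _ = b ^ k * a ^ k := by rw [ha2]
      _ = (a * b) ^ k := by rw [hab.mul_pow, (hab.pow_pow k k).eq]
  · calc (b' * a') * (a * b) ^ (k + 1)
        = b' * (a' * a ^ (k + 1)) * b ^ (k + 1) := by rw [hab.mul_pow]; noncomm_ring
      _ = b' * a ^ k * b ^ (k + 1) := by rw [ha3]
      _ = b' * b ^ (k + 1) * a ^ k := by rw [mul_assoc, (hab.pow_pow k (k + 1)).eq, mul_assoc]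
      _ = b ^ k * a ^ k := by rw [hb3]
      _ = (a * b) ^ k := by rw [hab.mul_pow, (hab.pow_pow k k).eq]
end

section
/- Let a, b ∈ R have WD inverses a', b' respectively with common index k. If ab = ba and b'ba = ab'b, then a'b' is a WD inverse of ab with index k. -/
theorem WD_forward_order {R : Type*} [Ring R] (a b a' b' : R) (k : ℕ) (hk : 0 < k)
    (ha1 : a * a' * a = a) (ha2 : a ^ (k + 1) * a' = a ^ k) (ha3 : a' * a ^ (k + 1) = a ^ k)
    (hb1 : b * b' * b = b) (hb2 : b ^ (k + 1) * b' = b ^ k) (hb3 : b' * b ^ (k + 1) = b ^ k)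
    (hcomm : a * b = b * a) (hc : b' * b * a = a * (b' * b)) :
    a * b * (a' * b') * (a * b) = a * b ∧ (a * b) ^ (k + 1) * (a' * b') = (a * b) ^ k ∧ (a' * b') * (a * b) ^ (k + 1) = (a * b) ^ k := by
  have hab : Commute a b := hcomm
  have hce : Commute (b' * b) a := hc
  -- b' (a b) = a (b' b)
  have e1 : b' * (a * b) = a * (b' * b) := by
    rw [hcomm, ← mul_assoc, hc]
  -- a b a' a = b a
  have e2 : a * b * a' * a = b * a := by
    rw [hcomm, mul_assoc b a a', mul_assoc b (a * a') a, ha1]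
  refine ⟨?_, ?_, ?_⟩
  · calc a * b * (a' * b') * (a * b)
        = (a * b * a') * (b' * (a * b)) := by noncomm_ring
      _ = (a * b * a') * (a * (b' * b)) := by rw [e1]
      _ = (a * b * a' * a) * (b' * b) := by noncomm_ring
      _ = (b * a) * (b' * b) := by rw [e2]
      _ = a * (b * b' * b) := by rw [← hcomm]; noncomm_ring
      _ = a * b := by rw [hb1]
  · calc (a * b) ^ (k + 1) * (a' * b')
        = (a ^ (k + 1) * b ^ (k + 1)) * (a' * b') := by rw [hab.mul_pow]
      _ = (b ^ (k + 1) * a ^ (k + 1)) * (a' * b') := by rw [(hab.pow_pow (k+1) (k+1)).eq]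
      _ = b ^ (k + 1) * (a ^ (k + 1) * a') * b' := by noncomm_ring
      _ = b ^ (k + 1) * a ^ k * b' := by rw [ha2]
      _ = a ^ k * (b ^ (k + 1) * b') := by rw [show b ^ (k + 1) * a ^ k = a ^ k * b ^ (k + 1) from ((hab.pow_pow k (k+1)).eq).symm, mul_assoc]
      _ = a ^ k * b ^ k := by rw [hb2]
      _ = (a * b) ^ k := (hab.mul_pow k).symm
  · calc (a' * b') * (a * b) ^ (k + 1)
        = a' * (b' * (a * b) * (a * b) ^ k) := by rw [pow_succ']; noncomm_ring
      _ = a' * (a * (b' * b) * (a ^ k * b ^ k)) := by rw [e1, hab.mul_pow]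
      _ = a' * (a * (a ^ k * ((b' * b) * b ^ k))) := by
            rw [mul_assoc a (b' * b) (a ^ k * b ^ k),
              show (b' * b) * (a ^ k * b ^ k) = a ^ k * ((b' * b) * b ^ k) by
                rw [← mul_assoc, (hce.pow_right k).eq, mul_assoc]]
      _ = a' * (a * (a ^ k * b ^ k)) := by
            rw [show (b' * b) * b ^ k = b ^ k by rw [mul_assoc, ← pow_succ', hb3]]
      _ = (a' * a ^ (k + 1)) * b ^ k := by rw [pow_succ']; noncomm_ring
      _ = a ^ k * b ^ k := by rw [ha3]
      _ = (a * b) ^ k := (hab.mul_pow k).symm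
end

section
/- Let a, b ∈ R have WD inverses a', b' respectively with common index k. If a'(a+b)b' = a' + b', then aa'bb' = aa', a'ab'b = b'b, a^k bb' = a^k, and a'a b^k = b^k. -/
theorem WD_absorption {R : Type*} [Ring R] (a b a' b' : R) (k : ℕ) (hk : 0 < k)
    (ha1 : a * a' * a = a) (ha2 : a ^ (k + 1) * a' = a ^ k) (ha3 : a' * a ^ (k + 1) = a ^ k)
    (hb1 : b * b' * b = b) (hb2 : b ^ (k + 1) * b' = b ^ k) (hb3 : b' * b ^ (k + 1) = b ^ k)
    (habs : a' * (a + b) * b' = a' + b') :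
    a * a' * (b * b') = a * a' ∧ a' * a * (b' * b) = b' * b ∧ a ^ k * (b * b') = a ^ k ∧ a' * a * b ^ k = b ^ k := by
  have h1 : a * a' * (b * b') = a * a' := by
    calc a * a' * (b * b')
        = a * (a' * (a + b) * b') - (a * a' * a) * b' := by noncomm_ring
      _ = a * (a' + b') - a * b' := by rw [habs, ha1]
      _ = a * a' := by noncomm_ring
  have h2 : a' * a * (b' * b) = b' * b := by
    calc a' * a * (b' * b)
        = (a' * (a + b) * b') * b - a' * (b * b' * b) := by noncomm_ring
      _ = (a' + b') * b - a' * b := by rw [habs, hb1]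
      _ = b' * b := by noncomm_ring
  refine ⟨h1, h2, ?_, ?_⟩
  · calc a ^ k * (b * b')
        = a ^ (k + 1) * a' * (b * b') := by rw [ha2]
      _ = a ^ k * (a * a' * (b * b')) := by rw [pow_succ]; noncomm_ring
      _ = a ^ k * (a * a') := by rw [h1]
      _ = a ^ (k + 1) * a' := by rw [pow_succ, mul_assoc]
      _ = a ^ k := ha2
  · calc a' * a * b ^ k
        = a' * a * (b' * b ^ (k + 1)) := by rw [hb3]
      _ = a' * a * (b' * b) * b ^ k := by rw [pow_succ']; noncomm_ring
      _ = b' * b * b ^ k := by rw [h2]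
      _ = b' * b ^ (k + 1) := by rw [pow_succ']; noncomm_ring
      _ = b ^ k := hb3
end

section
/- Let a, b ∈ R have WD inverses a', b' with common index k. If b'aa' = a' and b'ba' = b', then b'(a+b)a' = a' + b'; moreover b^k aa' = b^k, b'b a^k = a^k, bb'aa' = bb', and b'ba'a = a'a. -/
theorem WD_absorption2 {R : Type*} [Ring R] (a b a' b' : R) (k : ℕ) (hk : 0 < k)
    (ha1 : a * a' * a = a) (ha2 : a ^ (k + 1) * a' = a ^ k) (ha3 : a' * a ^ (k + 1) = a ^ k)
    (hb1 : b * b' * b = b) (hb2 : b ^ (k + 1) * b' = b ^ k) (hb3 : b' * b ^ (k + 1) = b ^ k)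
    (hc1 : b' * (a * a') = a') (hc2 : b' * b * a' = b') :
    b' * (a + b) * a' = a' + b' ∧ b ^ k * (a * a') = b ^ k ∧ b' * b * a ^ k = a ^ k ∧ b * b' * (a * a') = b * b' ∧ b' * b * (a' * a) = a' * a := by
  have hba : b' * a = a' * a := by
    calc b' * a = b' * (a * a' * a) := by rw [ha1]
    _ = b' * (a * a') * a := by noncomm_ring
    _ = a' * a := by rw [hc1]
  refine ⟨?_, ?_, ?_, ?_, ?_⟩
  · calc b' * (a + b) * a' = b' * (a * a') + b' * b * a' := by noncomm_ring
    _ = a' + b' := by rw [hc1, hc2]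
  · have h1 : b ^ (k + 1) * a' = b ^ k := by
      calc b ^ (k + 1) * a' = (b ^ (k + 1) * b') * b * a' := by
            rw [hb2]; noncomm_ring [pow_succ]
      _ = b ^ (k + 1) * (b' * b * a') := by noncomm_ring
      _ = b ^ k := by rw [hc2, hb2]
    calc b ^ k * (a * a') = (b ^ (k + 1) * b') * (a * a') := by rw [hb2]
    _ = b ^ (k + 1) * (b' * (a * a')) := by noncomm_ring
    _ = b ^ k := by rw [hc1, h1]
  · calc b' * b * a ^ k = b' * b * (a' * a ^ (k + 1)) := by rw [ha3]
    _ = (b' * b * a') * a ^ (k + 1) := by noncomm_ring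
    _ = b' * a ^ (k + 1) := by rw [hc2]
    _ = b' * (a * (a' * a ^ (k + 1))) := by rw [ha3, ← pow_succ']
    _ = b' * (a * a') * a ^ (k + 1) := by noncomm_ring
    _ = a ^ k := by rw [hc1, ha3]
  · calc b * b' * (a * a') = b * (b' * (a * a')) := by noncomm_ring
    _ = b * b' * b * a' := by rw [hc1, hb1]
    _ = b * (b' * b * a') := by noncomm_ring
    _ = b * b' := by rw [hc2]
  · calc b' * b * (a' * a) = (b' * b * a') * a := by noncomm_ring
    _ = b' * a := by rw [hc2]
    _ = a' * a := hba
end
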